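/- Let G be a d-regular graph on n vertices (d ≥ 1) with adjacency matrix A, and let λ be a real number such that xᵀAx ≤ λ·‖x‖² for every vector x ∈ ℝⁿ whose coordinates sum to 0 (i.e., λ is an upper bound on the second largest adjacency eigenvalue of G). Then G is an α-expander with α = (d−λ)/(2d). -/
import Mathlib


open scoped Classical

/-- The external neighborhood of a vertex set `U` in a simple graph `G`:
all vertices outside `U` having a neighbor in `U`. -/
def SimpleGraph.extNb {V : Type*} (G : SimpleGraph V) (U : Set V) : Set V :=
  {v | v ∉ U ∧ ∃ u ∈ U, G.Adj u v}

/-- A graph `G` on `n` vertices is an `α`-expander if every vertex subset `U` with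
`|U| ≤ n/2` satisfies `|N_G(U)| ≥ α |U|`. -/
def SimpleGraph.IsExpander {V : Type*} [Fintype V] (G : SimpleGraph V) (α : ℝ) : Prop :=
  ∀ U : Set V, (U.ncard : ℝ) ≤ (Fintype.card V : ℝ) / 2 →
    α * U.ncard ≤ ((G.extNb U).ncard : ℝ)

/-- `G` is a `(k, α)`-expander if every vertex subset `U` with `|U| ≤ k`
satisfies `|N_G(U)| ≥ α |U|`. -/
def SimpleGraph.IsKExpander {V : Type*} (G : SimpleGraph V) (k α : ℝ) : Prop :=
  ∀ U : Set V, (U.ncard : ℝ) ≤ k → α * U.ncard ≤ ((G.extNb U).ncard : ℝ)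

open Matrix in
set_option maxHeartbeats 1000000 in
theorem stmt_6 {V : Type*} [Fintype V] [DecidableEq V] (G : SimpleGraph V)
    [DecidableRel G.Adj] (d : ℕ) (hd : 1 ≤ d) (hreg : G.IsRegularOfDegree d)
    (lam : ℝ)
    (hlam : ∀ x : V → ℝ, (∑ i, x i) = 0 →
      x ⬝ᵥ ((G.adjMatrix ℝ) *ᵥ x) ≤ lam * (∑ i, (x i) ^ 2)) :
    G.IsExpander (((d : ℝ) - lam) / (2 * d)) := by
  intro U hU
  have hdR : (1 : ℝ) ≤ (d : ℝ) := by exact_mod_cast hd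
  have hdpos : (0 : ℝ) < 2 * d := by linarith
  -- trivial case: lam ≥ d
  by_cases hld : lam < (d : ℝ)
  swap
  · have hα : ((d : ℝ) - lam) / (2 * d) ≤ 0 :=
      div_nonpos_of_nonpos_of_nonneg (by linarith) hdpos.le
    have : ((d : ℝ) - lam) / (2 * d) * U.ncard ≤ 0 :=
      mul_nonpos_of_nonpos_of_nonneg hα (Nat.cast_nonneg _)
    exact this.trans (Nat.cast_nonneg _)
  -- trivial case: U empty
  by_cases hu0 : U.ncard = 0
  · rw [hu0]; simpa using Nat.cast_nonneg ((G.extNb U).ncard)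
  -- main case
  set A : Matrix V V ℝ := G.adjMatrix ℝ with hA
  have hrow : ∀ i : V, ∑ j, A i j = (d : ℝ) := by
    intro i
    simp only [hA, SimpleGraph.adjMatrix_apply, Finset.sum_boole]
    rw [← SimpleGraph.neighborFinset_eq_filter, ← SimpleGraph.degree, hreg i]
  have hsymm : ∀ i j, A i j = A j i := by
    intro i j; simp [hA, SimpleGraph.adjMatrix_apply, G.adj_comm]
  have hcol : ∀ j : V, ∑ i, A i j = (d : ℝ) := by
    intro j; simp_rw [fun i => hsymm i j]; exact hrow j
  have hA0 : ∀ i j, 0 ≤ A i j := by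
    intro i j; by_cases h : G.Adj i j <;> simp [hA, h]
  set n : ℝ := (Fintype.card V : ℝ) with hn
  set uc : ℝ := (U.ncard : ℝ) with huc
  set mR : ℝ := ((G.extNb U).ncard : ℝ) with hmR
  have hucard : U.ncard = U.toFinset.card := Set.ncard_eq_toFinset_card' U
  have hmcard : (G.extNb U).ncard = (G.extNb U).toFinset.card :=
    Set.ncard_eq_toFinset_card' _
  set χ : V → ℝ := fun v => if v ∈ U then 1 else 0 with hχ
  have hχsum : ∑ v, χ v = uc := by
    simp only [hχ, Finset.sum_boole]
    rw [Set.filter_mem_univ_eq_toFinset, huc, hucard]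
  set x : V → ℝ := fun v => n * χ v - uc with hx
  have hxsum : ∑ v, x v = 0 := by
    simp only [hx]
    rw [Finset.sum_sub_distrib, ← Finset.mul_sum, hχsum, Finset.sum_const,
      Finset.card_univ, nsmul_eq_mul, ← hn]
    ring
  set S : ℝ := ∑ i, ∑ j, A i j * (χ i * χ j) with hS
  have hDrow : ∑ i, ∑ j, A i j * χ i = (d : ℝ) * uc := by
    have h : ∀ i : V, ∑ j, A i j * χ i = (d : ℝ) * χ i := by
      intro i; rw [← Finset.sum_mul, hrow]
    simp_rw [h]; rw [← Finset.mul_sum, hχsum]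
  have hDcol : ∑ i, ∑ j, A i j * χ j = (d : ℝ) * uc := by
    rw [Finset.sum_comm]
    have h : ∀ j : V, ∑ i, A i j * χ j = (d : ℝ) * χ j := by
      intro j; rw [← Finset.sum_mul, hcol]
    simp_rw [h]; rw [← Finset.mul_sum, hχsum]
  have hE : ∑ i : V, ∑ j, A i j = (d : ℝ) * n := by
    simp_rw [hrow]
    rw [Finset.sum_const, Finset.card_univ, nsmul_eq_mul, ← hn, mul_comm]
  -- quadratic form identity
  have hquad : x ⬝ᵥ (A *ᵥ x) = n ^ 2 * S - 2 * (n * uc * ((d : ℝ) * uc))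
      + uc ^ 2 * ((d : ℝ) * n) := by
    have h1 : x ⬝ᵥ (A *ᵥ x) = ∑ i, ∑ j, A i j * (x i * x j) := by
      simp only [dotProduct, mulVec, Finset.mul_sum]
      exact Finset.sum_congr rfl fun i _ => Finset.sum_congr rfl fun j _ => by ring
    have h2 : ∀ i j : V, A i j * (x i * x j) =
        n ^ 2 * (A i j * (χ i * χ j)) - n * uc * (A i j * χ i)
          - n * uc * (A i j * χ j) + uc ^ 2 * A i j := by
      intro i j; simp only [hx]; ring
    rw [h1]
    simp_rw [h2]
    simp only [Finset.sum_add_distrib, Finset.sum_sub_distrib, ← Finset.mul_sum]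
    rw [hDrow, hDcol, hE, ← hS]
    ring
  have hnorm : ∑ i, (x i) ^ 2 = n ^ 2 * uc - n * uc ^ 2 := by
    have h2 : ∀ v : V, (x v) ^ 2 = n ^ 2 * χ v - 2 * n * uc * χ v + uc ^ 2 := by
      intro v; simp only [hx, hχ]; split <;> ring
    simp_rw [h2]
    simp only [Finset.sum_add_distrib, Finset.sum_sub_distrib, ← Finset.mul_sum]
    rw [hχsum, Finset.sum_const, Finset.card_univ, nsmul_eq_mul, ← hn]
    ring
  have hmain : n ^ 2 * S - 2 * (n * uc * ((d : ℝ) * uc)) + uc ^ 2 * ((d : ℝ) * n)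
      ≤ lam * (n ^ 2 * uc - n * uc ^ 2) := by
    rw [← hquad, ← hnorm]; exact hlam x hxsum
  -- boundary count
  set g : V → ℝ := fun j => ∑ i, A i j * χ i with hg
  have hgtot : ∑ j, g j = (d : ℝ) * uc := by
    simp only [hg]; rw [Finset.sum_comm]; exact hDrow
  have hgS : ∑ j, χ j * g j = S := by
    simp only [hg, Finset.mul_sum]
    rw [Finset.sum_comm, hS]
    exact Finset.sum_congr rfl fun i _ => Finset.sum_congr rfl fun j _ => by ring
  have hsplit : (∑ j, (1 - χ j) * g j) = (d : ℝ) * uc - S := by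
    have : ∀ j : V, (1 - χ j) * g j = g j - χ j * g j := fun j => by ring
    simp_rw [this]
    rw [Finset.sum_sub_distrib, hgtot, hgS]
  have hbound : (∑ j, (1 - χ j) * g j) ≤ (d : ℝ) * mR := by
    have hle : ∀ j : V, (1 - χ j) * g j ≤ if j ∈ G.extNb U then (d : ℝ) else 0 := by
      intro j
      by_cases hj : j ∈ G.extNb U
      · have hjU : j ∉ U := hj.1
        have hχj : χ j = 0 := by simp [hχ, hjU]
        rw [hχj, if_pos hj]
        have : g j ≤ ∑ i, A i j := by
          apply Finset.sum_le_sum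
          intro i _
          by_cases hi : i ∈ U <;> simp [hχ, hi, hA0 i j]
        simpa [hcol j] using this
      · rw [if_neg hj]
        by_cases hjU : j ∈ U
        · have : χ j = 1 := by simp [hχ, hjU]
          rw [this]; ring_nf; simp
        · have hg0 : g j = 0 := by
            apply Finset.sum_eq_zero
            intro i _
            by_cases hi : i ∈ U
            · have : ¬ G.Adj i j := fun hadj => hj ⟨hjU, i, hi, hadj⟩
              simp [hA, SimpleGraph.adjMatrix_apply, this]
            · simp [hχ, hi]
          rw [hg0, mul_zero]
    calc (∑ j, (1 - χ j) * g j) ≤ ∑ j, (if j ∈ G.extNb U then (d : ℝ) else 0) :=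
          Finset.sum_le_sum fun j _ => hle j
      _ = (d : ℝ) * mR := by
          simp only [Finset.sum_ite, Finset.sum_const, Finset.sum_const_zero, add_zero,
            nsmul_eq_mul]
          rw [Set.filter_mem_univ_eq_toFinset, hmR, hmcard]
          ring
  have hBm : (d : ℝ) * uc - S ≤ (d : ℝ) * mR := hsplit ▸ hbound
  -- wrap up numerically
  have hucpos : 0 < uc := by
    rw [huc]; exact_mod_cast Nat.pos_of_ne_zero hu0
  have hhalf : uc ≤ n / 2 := by rw [huc]; exact hU
  have hnpos : 0 < n := by linarith
  have hn2 : 0 < n ^ 2 := by positivity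
  rw [div_mul_eq_mul_div, div_le_iff₀ hdpos]
  have key1 : n * uc * (n - uc) * ((d : ℝ) - lam) ≤ n ^ 2 * ((d : ℝ) * mR) := by
    nlinarith [mul_le_mul_of_nonneg_left hBm (le_of_lt hn2), hmain]
  have hfac : 0 ≤ (n - uc - n / 2) * (n * uc * ((d : ℝ) - lam)) :=
    mul_nonneg (by linarith)
      (mul_nonneg (mul_nonneg hnpos.le hucpos.le) (by linarith))
  have key2 : n ^ 2 * uc * ((d : ℝ) - lam) / 2 ≤ n * uc * (n - uc) * ((d : ℝ) - lam) := by
    nlinarith [hfac]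
  have key3 : n ^ 2 * (uc * ((d : ℝ) - lam) / 2) ≤ n ^ 2 * ((d : ℝ) * mR) := by
    nlinarith [key2.trans key1]
  have key4 : uc * ((d : ℝ) - lam) / 2 ≤ (d : ℝ) * mR :=
    le_of_mul_le_mul_left key3 hn2
  linarith
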